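/- Let G1 be an r1-regular graph with n1 vertices and m1 edges (r1 ≥ 1), G2 an r2-regular graph (r2 ≥ 1), G3 an r3-regular graph (r3 ≥ 1), and let 𝔊 = G1^S ◊ (G2^V ∪ G3^E). If μ ≠ 0 is an eigenvalue of 𝓛(G2) with multiplicity k, then (2 + r2·μ)/(r2 + 2) is an eigenvalue of 𝓛(𝔊) with multiplicity at least m1·k. -/

import Mathlib

open Matrix Polynomial BigOperators Kronecker

namespace NLS

variable {V : Type*}

/-- Adjacency matrix over `ℝ` (classical decidability). -/
noncomputable def adjMat (G : SimpleGraph V) : Matrix V V ℝ :=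
  letI := Classical.decRel G.Adj
  G.adjMatrix ℝ

/-- Degree of a vertex (classical decidability). -/
noncomputable def deg [Fintype V] (G : SimpleGraph V) (v : V) : ℕ :=
  letI := Classical.decRel G.Adj
  G.degree v

/-- The normalized Laplacian `I - D^{-1/2} A D^{-1/2}`. -/
noncomputable def normLap [Fintype V] (G : SimpleGraph V) : Matrix V V ℝ :=
  letI := Classical.decEq V
  1 - (Matrix.diagonal fun v => (Real.sqrt (deg G v))⁻¹) * adjMat G *
      (Matrix.diagonal fun v => (Real.sqrt (deg G v))⁻¹)

/-- `G` is `r`-regular. -/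
def IsReg [Fintype V] (G : SimpleGraph V) (r : ℕ) : Prop := ∀ v, deg G v = r

/-- Vertex-edge incidence matrix over `ℝ`. -/
def incMat [DecidableEq V] (G : SimpleGraph V) : Matrix V G.edgeSet ℝ :=
  Matrix.of fun v e => if v ∈ (e : Sym2 V) then 1 else 0

/-- The number of spanning trees of `G`. -/
noncomputable def numSpanningTrees [Fintype V] (G : SimpleGraph V) : ℕ :=
  Nat.card {H : SimpleGraph V // H ≤ G ∧ H.IsTree}

section Corona

variable {V1 V2 V3 : Type*}

/-- Adjacency for the subdivision vertex-edge neighbourhood **vertex**-corona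
`G1^S ⋈ (G2^V ∪ G3^E)`. Vertices: original `V1`, inserted `G1.edgeSet`,
copies of `G2` indexed by `V1`, copies of `G3` indexed by `G1.edgeSet`. -/
def svevAdj (G1 : SimpleGraph V1) (G2 : SimpleGraph V2) (G3 : SimpleGraph V3) :
    (V1 ⊕ (G1.edgeSet ⊕ ((V1 × V2) ⊕ (G1.edgeSet × V3)))) →
    (V1 ⊕ (G1.edgeSet ⊕ ((V1 × V2) ⊕ (G1.edgeSet × V3)))) → Prop
  | .inl v, .inr (.inl e) => v ∈ (e : Sym2 V1)
  | .inr (.inl e), .inl v => v ∈ (e : Sym2 V1)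
  | .inr (.inl e), .inr (.inr (.inl p)) => p.1 ∈ (e : Sym2 V1)
  | .inr (.inr (.inl p)), .inr (.inl e) => p.1 ∈ (e : Sym2 V1)
  | .inr (.inl e), .inr (.inr (.inr q)) => q.1 = e
  | .inr (.inr (.inr q)), .inr (.inl e) => q.1 = e
  | .inr (.inr (.inl p)), .inr (.inr (.inl p')) => p.1 = p'.1 ∧ G2.Adj p.2 p'.2
  | .inr (.inr (.inr q)), .inr (.inr (.inr q')) => q.1 = q'.1 ∧ G3.Adj q.2 q'.2
  | _, _ => False

/-- The subdivision vertex-edge neighbourhood vertex-corona `G1^S ⋈ (G2^V ∪ G3^E)`. -/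
def svev (G1 : SimpleGraph V1) (G2 : SimpleGraph V2) (G3 : SimpleGraph V3) :
    SimpleGraph (V1 ⊕ (G1.edgeSet ⊕ ((V1 × V2) ⊕ (G1.edgeSet × V3)))) where
  Adj := svevAdj G1 G2 G3
  symm := by
    constructor
    rintro (v|e|p|q) (v'|e'|p'|q') h <;>
      first
        | exact h
        | exact ⟨h.1.symm, h.2.symm⟩
        | exact h.elim
  loopless := by
    constructor
    rintro (v|e|p|q) h
    · exact h
    · exact h
    · exact G2.loopless.irrefl _ h.2
    · exact G3.loopless.irrefl _ h.2

/-- Adjacency for the subdivision vertex-edge neighbourhood **edge**-corona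
`G1^S ◊ (G2^V ∪ G3^E)`. Vertices: original `V1`, inserted `G1.edgeSet`,
copies of `G2` indexed by `G1.edgeSet`, copies of `G3` indexed by `V1`. -/
def sveeAdj (G1 : SimpleGraph V1) (G2 : SimpleGraph V2) (G3 : SimpleGraph V3) :
    (V1 ⊕ (G1.edgeSet ⊕ ((G1.edgeSet × V2) ⊕ (V1 × V3)))) →
    (V1 ⊕ (G1.edgeSet ⊕ ((G1.edgeSet × V2) ⊕ (V1 × V3)))) → Prop
  | .inl v, .inr (.inl e) => v ∈ (e : Sym2 V1)
  | .inr (.inl e), .inl v => v ∈ (e : Sym2 V1)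
  | .inl v, .inr (.inr (.inl p)) => v ∈ (p.1 : Sym2 V1)
  | .inr (.inr (.inl p)), .inl v => v ∈ (p.1 : Sym2 V1)
  | .inl v, .inr (.inr (.inr q)) => q.1 = v
  | .inr (.inr (.inr q)), .inl v => q.1 = v
  | .inr (.inr (.inl p)), .inr (.inr (.inl p')) => p.1 = p'.1 ∧ G2.Adj p.2 p'.2
  | .inr (.inr (.inr q)), .inr (.inr (.inr q')) => q.1 = q'.1 ∧ G3.Adj q.2 q'.2
  | _, _ => False

/-- The subdivision vertex-edge neighbourhood edge-corona `G1^S ◊ (G2^V ∪ G3^E)`. -/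
def svee (G1 : SimpleGraph V1) (G2 : SimpleGraph V2) (G3 : SimpleGraph V3) :
    SimpleGraph (V1 ⊕ (G1.edgeSet ⊕ ((G1.edgeSet × V2) ⊕ (V1 × V3)))) where
  Adj := sveeAdj G1 G2 G3
  symm := by
    constructor
    rintro (v|e|p|q) (v'|e'|p'|q') h <;>
      first
        | exact h
        | exact ⟨h.1.symm, h.2.symm⟩
        | exact h.elim
  loopless := by
    constructor
    rintro (v|e|p|q) h
    · exact h
    · exact h
    · exact G2.loopless.irrefl _ h.2
    · exact G3.loopless.irrefl _ h.2

end Corona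


section Aux

open Matrix Polynomial

variable {n : Type*} [Fintype n] [DecidableEq n]

lemma charpoly_diagonal' (d : n → ℝ) : (diagonal d).charpoly = ∏ i, (X - C (d i)) := by
  unfold Matrix.charpoly
  have : charmatrix (diagonal d) = diagonal (fun i => X - C (d i)) := by
    ext i j
    by_cases h : i = j
    · subst h; simp [charmatrix_apply]
    · simp [charmatrix_apply, diagonal_apply_ne _ h]
  rw [this, det_diagonal]

lemma charpoly_conj' (U V M : Matrix n n ℝ) (hUV : U * V = 1) (hVU : V * U = 1) :
    (U * M * V).charpoly = M.charpoly := by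
  unfold Matrix.charpoly
  have hdet : (U.map C).det * (V.map C).det = 1 := by
    rw [← det_mul, ← Matrix.map_mul, hUV]
    simp
  have hc : charmatrix (U * M * V) = U.map C * charmatrix M * V.map C := by
    unfold charmatrix
    rw [Matrix.mul_sub, Matrix.sub_mul]
    congr 1
    · have hcomm : Commute (scalar n (X : ℝ[X])) (U.map C) :=
        scalar_commute _ (fun r' => Commute.all _ _) _
      rw [(hcomm.symm).eq, mul_assoc, ← Matrix.map_mul, hUV]
      simp
    · simp only [RingHom.mapMatrix_apply]
      rw [Matrix.map_mul, Matrix.map_mul]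
  rw [hc, det_mul, det_mul, mul_comm, ← mul_assoc, mul_comm ((V.map C).det), hdet, one_mul]

lemma hermitian_charpoly_eq {M : Matrix n n ℝ} (hM : M.IsHermitian) :
    M.charpoly = ∏ i, (X - C (hM.eigenvalues i)) := by
  have hU : (hM.eigenvectorUnitary : Matrix n n ℝ) *
      (star (hM.eigenvectorUnitary : Matrix n n ℝ)) = 1 :=
    (Matrix.mem_unitaryGroup_iff).mp hM.eigenvectorUnitary.2
  have hU' : (star (hM.eigenvectorUnitary : Matrix n n ℝ)) *
      (hM.eigenvectorUnitary : Matrix n n ℝ) = 1 :=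
    (Matrix.mem_unitaryGroup_iff').mp hM.eigenvectorUnitary.2
  conv_lhs => rw [hM.spectral_theorem]
  rw [Unitary.conjStarAlgAut_apply, charpoly_conj' _ _ _ hU hU']
  have : (RCLike.ofReal ∘ hM.eigenvalues : n → ℝ) = hM.eigenvalues := by
    ext i; simp
  rw [this, charpoly_diagonal']

lemma pow_dvd_prod_iff (d : n → ℝ) (μ : ℝ) (k : ℕ) :
    (X - C μ) ^ k ∣ ∏ i, (X - C (d i)) ↔
      k ≤ (Finset.univ.filter (fun i => d i = μ)).card := by
  set p : ℝ[X] := ∏ i, (X - C (d i)) with hp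
  have hp0 : p ≠ 0 := by
    apply Finset.prod_ne_zero_iff.mpr
    intro i _
    exact X_sub_C_ne_zero _
  have hroots : p.roots = (Finset.univ.val.map d) := by
    have : p = ((Finset.univ.val.map d).map (fun a => X - C a)).prod := by
      rw [hp, Finset.prod, Multiset.map_map]
      rfl
    rw [this]
    exact roots_multiset_prod_X_sub_C _
  rw [← Polynomial.le_rootMultiplicity_iff hp0, ← Polynomial.count_roots, hroots]
  rw [Multiset.count_map]
  have : (Finset.univ.filter (fun i => d i = μ)).card =
      Multiset.card (Multiset.filter (fun a => μ = d a) Finset.univ.val) := by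
    rw [Finset.card, Finset.filter_val]
    congr 1
    apply Multiset.filter_congr
    intro x _
    exact ⟨fun h => h.symm, fun h => h.symm⟩
  rw [this]

lemma eigenvectorBasis_fun_linearIndependent {M : Matrix n n ℝ} (hM : M.IsHermitian) :
    LinearIndependent ℝ (fun j => (⇑(hM.eigenvectorBasis j) : n → ℝ)) :=
  (hM.eigenvectorBasis.toBasis.map (WithLp.linearEquiv 2 ℝ (n → ℝ))).linearIndependent

lemma exists_eigenvectors {M : Matrix n n ℝ} (hM : M.IsHermitian) {μ : ℝ} {k : ℕ}
    (h : (X - C μ) ^ k ∣ M.charpoly) :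
    ∃ v : Fin k → (n → ℝ), LinearIndependent ℝ v ∧ ∀ j, M *ᵥ v j = μ • v j := by
  rw [hermitian_charpoly_eq hM, pow_dvd_prod_iff] at h
  set s := Finset.univ.filter (fun i => hM.eigenvalues i = μ) with hs
  have hcard : Fintype.card (Fin k) ≤ Fintype.card {i // i ∈ s} := by
    simpa [Fintype.card_coe] using h
  obtain ⟨f⟩ := Function.Embedding.nonempty_of_card_le hcard
  refine ⟨fun j => ⇑(hM.eigenvectorBasis (f j).1), ?_, ?_⟩
  · exact (eigenvectorBasis_fun_linearIndependent hM).comp (fun j => (f j).1)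
      (fun a b hab => f.injective (Subtype.ext hab))
  · intro j
    have hf : hM.eigenvalues (f j).1 = μ := by
      have h2 := (f j).2
      simp only [hs, Finset.mem_filter] at h2
      exact h2.2
    rw [hM.mulVec_eigenvectorBasis, hf]

lemma charpoly_pow_dvd_of_eigenvectors {ι : Type*} [Fintype ι] {M : Matrix n n ℝ}
    (hM : M.IsHermitian) {lam : ℝ} (v : ι → (n → ℝ))
    (hv : LinearIndependent ℝ v) (heig : ∀ i, M *ᵥ v i = lam • v i) :
    (X - C lam) ^ (Fintype.card ι) ∣ M.charpoly := by
  rw [hermitian_charpoly_eq hM, pow_dvd_prod_iff]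
  set s := Finset.univ.filter (fun i => hM.eigenvalues i = lam) with hs
  set b : Module.Basis n ℝ (n → ℝ) :=
    hM.eigenvectorBasis.toBasis.map (WithLp.linearEquiv 2 ℝ (n → ℝ)) with hbdef
  have hb : ∀ j, b j = ⇑(hM.eigenvectorBasis j) := fun j => rfl
  have hMb : ∀ j, M *ᵥ b j = hM.eigenvalues j • b j := by
    intro j; rw [hb j, hM.mulVec_eigenvectorBasis]
  have hmem : ∀ i, v i ∈ Submodule.span ℝ (b '' ↑s) := by
    intro i
    rw [Module.Basis.mem_span_image]
    intro j hj
    have hj' : b.repr (v i) j ≠ 0 := Finsupp.mem_support_iff.mp hj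
    by_contra hjs
    apply hj'
    have hjlam : hM.eigenvalues j ≠ lam := by
      intro hcon
      exact hjs (by simp [hs, hcon])
    have hexp : v i = ∑ l, b.repr (v i) l • b l := (b.sum_repr (v i)).symm
    have hz : ∑ l, ((hM.eigenvalues l - lam) * b.repr (v i) l) • b l = 0 := by
      have h1 : M *ᵥ v i = ∑ l, b.repr (v i) l • (hM.eigenvalues l • b l) := by
        conv_lhs => rw [hexp]
        rw [show (M *ᵥ ∑ l, b.repr (v i) l • b l)
            = M.mulVecLin (∑ l, b.repr (v i) l • b l) from rfl]
        rw [map_sum]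
        congr 1; ext l
        rw [LinearMap.map_smul, M.mulVecLin_apply, hMb l]
      have h2 : lam • v i = ∑ l, b.repr (v i) l • (lam • b l) := by
        conv_lhs => rw [hexp, Finset.smul_sum]
        congr 1; ext l
        rw [smul_comm]
      calc ∑ l, ((hM.eigenvalues l - lam) * b.repr (v i) l) • b l
          = ∑ l, (b.repr (v i) l • (hM.eigenvalues l • b l)
              - b.repr (v i) l • (lam • b l)) := by
            refine Finset.sum_congr rfl fun l _ => ?_
            rw [smul_smul, smul_smul, ← sub_smul]
            congr 1; ring
        _ = (M *ᵥ v i) - lam • v i := by rw [Finset.sum_sub_distrib, ← h1, ← h2]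
        _ = 0 := by rw [heig i, sub_self]
    have := Fintype.linearIndependent_iff.mp b.linearIndependent
      (fun l => (hM.eigenvalues l - lam) * b.repr (v i) l) hz j
    rcases mul_eq_zero.mp this with hc | hc
    · exact absurd (by linarith [sub_eq_zero.mp hc] : hM.eigenvalues j = lam) hjlam
    · exact hc
  set W := Submodule.span ℝ (b '' ↑s) with hW
  have hv' : LinearIndependent ℝ (fun i => (⟨v i, hmem i⟩ : W)) :=
    LinearIndependent.of_comp W.subtype hv
  have h1 : Fintype.card ι ≤ Module.finrank ℝ W := hv'.fintype_card_le_finrank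
  have h2 : Module.finrank ℝ W ≤ s.card := by
    have him : b '' ↑s = ↑(s.image b) := by rw [Finset.coe_image]
    rw [hW, him]
    exact le_trans (finrank_span_finset_le_card (s.image b)) Finset.card_image_le
  exact le_trans h1 h2

end Aux

section GraphAux

open Matrix

lemma adjMat_of_adj {V : Type*} (G : SimpleGraph V) {u v : V} (h : G.Adj u v) :
    adjMat G u v = 1 := by
  unfold adjMat
  simp [h]

lemma adjMat_of_not_adj {V : Type*} (G : SimpleGraph V) {u v : V} (h : ¬ G.Adj u v) :
    adjMat G u v = 0 := by
  unfold adjMat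
  simp [h]

lemma adjMat_ite {V : Type*} (G : SimpleGraph V) {u v : V} {P : Prop} [Decidable P]
    (hiff : G.Adj u v ↔ P) :
    adjMat G u v = if P then 1 else 0 := by
  split_ifs with h
  · exact adjMat_of_adj G (hiff.mpr h)
  · exact adjMat_of_not_adj G (fun hadj => h (hiff.mp hadj))

lemma adjMat_symm {V : Type*} (G : SimpleGraph V) (u v : V) :
    adjMat G u v = adjMat G v u := by
  classical
  rw [adjMat_ite G (Iff.rfl), adjMat_ite G (Iff.rfl)]
  simp [G.adj_comm u v]

lemma deg_eq_sum {V : Type*} [Fintype V] (G : SimpleGraph V) (v : V) :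
    ((deg G v : ℝ)) = ∑ u, adjMat G v u := by
  classical
  have : ∑ u, adjMat G v u = ∑ u, (if G.Adj v u then (1:ℝ) else 0) := by
    refine Finset.sum_congr rfl fun u _ => adjMat_ite G Iff.rfl
  rw [this, Finset.sum_boole]
  unfold deg
  rw [SimpleGraph.degree]
  congr 1
  rw [SimpleGraph.neighborFinset_eq_filter]

lemma normLap_mulVec {V : Type*} [Fintype V] (G : SimpleGraph V) (z : V → ℝ) (w : V) :
    (normLap G *ᵥ z) w = z w -
      (Real.sqrt (deg G w))⁻¹ * ∑ u, adjMat G w u * ((Real.sqrt (deg G u))⁻¹ * z u) := by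
  classical
  unfold normLap
  rw [Matrix.sub_mulVec, Pi.sub_apply, Matrix.one_mulVec]
  congr 1
  rw [Matrix.mulVec, dotProduct]
  rw [Finset.mul_sum]
  refine Finset.sum_congr rfl fun u _ => ?_
  rw [Matrix.mul_diagonal, Matrix.diagonal_mul]
  ring

lemma normLap_isHermitian {V : Type*} [Fintype V] (G : SimpleGraph V) :
    (normLap G).IsHermitian := by
  classical
  unfold Matrix.IsHermitian
  unfold normLap
  rw [Matrix.conjTranspose_sub, Matrix.conjTranspose_one]
  congr 1
  have hA : (adjMat G)ᵀ = adjMat G := by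
    ext i j; rw [Matrix.transpose_apply]; exact adjMat_symm G j i
  have hH : ∀ M : Matrix V V ℝ, Mᴴ = Mᵀ := fun M => rfl
  rw [hH, Matrix.transpose_mul, Matrix.transpose_mul, Matrix.diagonal_transpose, hA,
    Matrix.mul_assoc]

lemma adj_eigen_of_normLap {V : Type*} [Fintype V] (G : SimpleGraph V) {r : ℕ}
    (hr : 1 ≤ r) (hreg : IsReg G r) {μ : ℝ} {z : V → ℝ}
    (h : normLap G *ᵥ z = μ • z) :
    adjMat G *ᵥ z = ((r : ℝ) * (1 - μ)) • z := by
  have hrpos : (0:ℝ) < r := by exact_mod_cast hr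
  ext w
  have hw := congrFun h w
  rw [normLap_mulVec] at hw
  have hsimp : ∀ u, (Real.sqrt (deg G u))⁻¹ = (Real.sqrt r)⁻¹ := by
    intro u; rw [hreg u]
  rw [hsimp w] at hw
  have hstep : ∑ u, adjMat G w u * ((Real.sqrt (deg G u))⁻¹ * z u)
      = (Real.sqrt r)⁻¹ * ∑ u, adjMat G w u * z u := by
    rw [Finset.mul_sum]
    refine Finset.sum_congr rfl fun u _ => ?_
    rw [hsimp u]; ring
  rw [hstep] at hw
  have hss : (Real.sqrt r)⁻¹ * ((Real.sqrt r)⁻¹ * ∑ u, adjMat G w u * z u)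
      = (r:ℝ)⁻¹ * ∑ u, adjMat G w u * z u := by
    rw [← mul_assoc, ← mul_inv]
    congr 2
    exact Real.mul_self_sqrt (le_of_lt hrpos)
  rw [hss] at hw
  have hmv : (adjMat G *ᵥ z) w = ∑ u, adjMat G w u * z u := rfl
  rw [Pi.smul_apply, smul_eq_mul] at hw ⊢
  rw [hmv]
  have hkey : (r:ℝ)⁻¹ * ∑ u, adjMat G w u * z u = z w - μ * z w := by linarith
  calc ∑ u, adjMat G w u * z u = (r:ℝ) * ((r:ℝ)⁻¹ * ∑ u, adjMat G w u * z u) := by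
        field_simp
    _ = (r:ℝ) * (z w - μ * z w) := by rw [hkey]
    _ = (r:ℝ) * (1 - μ) * z w := by ring

lemma sum_eq_zero_of_adj_eigen {V : Type*} [Fintype V] (G : SimpleGraph V) {r : ℕ}
    (hreg : IsReg G r) {c : ℝ} {z : V → ℝ}
    (h : adjMat G *ᵥ z = c • z) (hc : c ≠ (r : ℝ)) :
    ∑ u, z u = 0 := by
  have hsum : ∑ w, (adjMat G *ᵥ z) w = (r : ℝ) * ∑ u, z u := by
    have h0 : ∑ w, (adjMat G *ᵥ z) w = ∑ w, ∑ u, adjMat G w u * z u := rfl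
    rw [h0, Finset.sum_comm]
    have h1 : ∀ u, ∑ w, adjMat G w u * z u = (r:ℝ) * z u := by
      intro u
      have h2 : ∑ w, adjMat G w u * z u = (∑ w, adjMat G u w) * z u := by
        rw [Finset.sum_mul]
        exact Finset.sum_congr rfl fun w _ => by rw [adjMat_symm]
      rw [h2, ← deg_eq_sum, hreg u]
    rw [Finset.sum_congr rfl fun u _ => h1 u, ← Finset.mul_sum]
  rw [h] at hsum
  have h3 : ∑ w, (c • z) w = c * ∑ u, z u := by
    simp [Finset.mul_sum]
  rw [h3] at hsum
  by_contra hz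
  apply hc
  exact mul_right_cancel₀ hz (by linarith)

lemma sum_mem_sym2 {V1 : Type*} [Fintype V1] [DecidableEq V1] (G1 : SimpleGraph V1)
    (e : G1.edgeSet) :
    ∑ v : V1, (if v ∈ (e : Sym2 V1) then (1:ℝ) else 0) = 2 := by
  obtain ⟨e, he⟩ := e
  induction e with
  | _ a b =>
    have hab : a ≠ b := (G1.mem_edgeSet.mp he).ne
    have hfil : Finset.univ.filter (fun v => v ∈ (s(a, b) : Sym2 V1)) = {a, b} := by
      ext v
      simp [Sym2.mem_iff]
    rw [Finset.sum_boole, hfil, Finset.card_pair hab]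
    norm_num

end GraphAux


theorem stmt_11 {V1 V2 V3 : Type*} [Fintype V1] [DecidableEq V1]
    [Fintype V2] [DecidableEq V2] [Fintype V3] [DecidableEq V3]
    (G1 : SimpleGraph V1) (G2 : SimpleGraph V2) (G3 : SimpleGraph V3)
    [Fintype G1.edgeSet]
    (r1 r2 r3 : ℕ) (hr1 : 1 ≤ r1) (hr2 : 1 ≤ r2) (hr3 : 1 ≤ r3)
    (h1 : IsReg G1 r1) (h2 : IsReg G2 r2) (h3 : IsReg G3 r3)
    (μ : ℝ) (hμ : μ ≠ 0) (k : ℕ)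
    (hmult : (X - C μ) ^ k ∣ (normLap G2).charpoly) :
    (X - C ((2 + (r2 : ℝ) * μ) / ((r2 : ℝ) + 2))) ^ (Fintype.card G1.edgeSet * k) ∣
      (normLap (svee G1 G2 G3)).charpoly := by
  classical
  obtain ⟨z, hzli, hz⟩ := exists_eigenvectors (normLap_isHermitian G2) hmult
  have hAz : ∀ j, adjMat G2 *ᵥ z j = ((r2:ℝ) * (1 - μ)) • z j :=
    fun j => adj_eigen_of_normLap G2 hr2 h2 (hz j)
  have hr2pos : (0:ℝ) < (r2:ℝ) := by exact_mod_cast hr2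
  have hsum : ∀ j, ∑ u, z j u = 0 := by
    intro j
    refine sum_eq_zero_of_adj_eigen G2 h2 (hAz j) ?_
    intro hcon
    apply hμ
    have hr2μ : (r2:ℝ) * μ = 0 := by nlinarith [hcon]
    rcases mul_eq_zero.mp hr2μ with h | h
    · exact absurd h (ne_of_gt hr2pos)
    · exact h
  set lam : ℝ := (2 + (r2:ℝ)*μ)/((r2:ℝ)+2) with hlam
  set 𝔊 := svee G1 G2 G3 with h𝔊
  let x : G1.edgeSet × Fin k → (V1 ⊕ (G1.edgeSet ⊕ ((G1.edgeSet × V2) ⊕ (V1 × V3)))) → ℝ :=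
    fun p => Sum.elim (fun _ => 0) (Sum.elim (fun _ => 0)
      (Sum.elim (fun q => if q.1 = p.1 then z p.2 q.2 else 0) (fun _ => 0)))
  -- linear independence of the x's
  have hxli : LinearIndependent ℝ x := by
    rw [Fintype.linearIndependent_iff]
    intro g hg
    rintro ⟨e0, j0⟩
    have key : ∑ j, g (e0, j) • z j = 0 := by
      funext w
      have hval := congrFun hg (Sum.inr (Sum.inr (Sum.inl (e0, w))))
      simp only [Finset.sum_apply, Pi.smul_apply, smul_eq_mul, Pi.zero_apply,
        Sum.elim_inr, Sum.elim_inl, x] at hval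
      rw [Fintype.sum_prod_type] at hval
      have h1 : ∀ e : G1.edgeSet, (∑ j, g (e, j) * (if e0 = e then z j w else 0))
          = if e0 = e then ∑ j, g (e, j) * z j w else 0 := by
        intro e
        split_ifs with h
        · simp
        · simp
      rw [Finset.sum_congr rfl (fun e _ => h1 e), Finset.sum_ite_eq] at hval
      simpa using hval
    exact Fintype.linearIndependent_iff.mp hzli (fun j => g (e0, j)) key j0
  -- degree of a G2-copy vertex
  have hdegcopy : ∀ q : G1.edgeSet × V2,
      ((deg 𝔊 (Sum.inr (Sum.inr (Sum.inl q))) : ℝ)) = (r2:ℝ) + 2 := by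
    rintro ⟨e', w⟩
    rw [deg_eq_sum, Fintype.sum_sum_type, Fintype.sum_sum_type, Fintype.sum_sum_type]
    have hA1 : ∀ v : V1, adjMat 𝔊 (Sum.inr (Sum.inr (Sum.inl (e', w)))) (Sum.inl v)
        = if v ∈ (e' : Sym2 V1) then 1 else 0 := fun v => adjMat_ite 𝔊 Iff.rfl
    have hA2 : ∀ e'' : G1.edgeSet,
        adjMat 𝔊 (Sum.inr (Sum.inr (Sum.inl (e', w)))) (Sum.inr (Sum.inl e'')) = 0 :=
      fun e'' => adjMat_of_not_adj 𝔊 (fun h => h)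
    have hA3 : ∀ q : G1.edgeSet × V2,
        adjMat 𝔊 (Sum.inr (Sum.inr (Sum.inl (e', w)))) (Sum.inr (Sum.inr (Sum.inl q)))
        = if e' = q.1 ∧ G2.Adj w q.2 then 1 else 0 :=
      fun q => adjMat_ite 𝔊 Iff.rfl
    have hA4 : ∀ q : V1 × V3,
        adjMat 𝔊 (Sum.inr (Sum.inr (Sum.inl (e', w)))) (Sum.inr (Sum.inr (Sum.inr q))) = 0 :=
      fun q => adjMat_of_not_adj 𝔊 (fun h => h)
    rw [Finset.sum_congr rfl (fun v _ => hA1 v), Finset.sum_congr rfl (fun e'' _ => hA2 e''),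
      Finset.sum_congr rfl (fun q _ => hA3 q), Finset.sum_congr rfl (fun q _ => hA4 q)]
    rw [sum_mem_sym2 G1 e']
    have h3 : ∑ q : G1.edgeSet × V2, (if e' = q.1 ∧ G2.Adj w q.2 then (1:ℝ) else 0)
        = (r2 : ℝ) := by
      rw [Fintype.sum_prod_type]
      have h4 : ∀ e'' : G1.edgeSet, (∑ w' : V2, if e' = e'' ∧ G2.Adj w w' then (1:ℝ) else 0)
          = if e' = e'' then (r2:ℝ) else 0 := by
        intro e''
        split_ifs with h
        · subst h
          have : ∀ w' : V2, (if e' = e' ∧ G2.Adj w w' then (1:ℝ) else 0)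
              = if G2.Adj w w' then (1:ℝ) else 0 := by
            intro w'; simp
          rw [Finset.sum_congr rfl (fun w' _ => this w')]
          have := deg_eq_sum G2 w
          rw [Finset.sum_congr rfl (fun w' _ => adjMat_ite G2 Iff.rfl)] at this
          rw [← this, h2 w]
        · refine Finset.sum_eq_zero fun w' _ => ?_
          simp [h]
      rw [Finset.sum_congr rfl (fun e'' _ => h4 e''), Finset.sum_ite_eq]
      simp
    rw [h3]
    simp
    ring
  -- the eigenvector equation
  have hxeig : ∀ p, normLap 𝔊 *ᵥ x p = lam • x p := by
    rintro ⟨e, j⟩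
    have hr2p2 : (0:ℝ) < (r2:ℝ) + 2 := by positivity
    set c : ℝ := (Real.sqrt ((r2:ℝ)+2))⁻¹ with hc
    have hcc : c * c = ((r2:ℝ)+2)⁻¹ := by
      rw [hc, ← mul_inv]
      congr 1
      exact Real.mul_self_sqrt (le_of_lt hr2p2)
    funext u
    rw [normLap_mulVec]
    have hS : ∑ u', adjMat 𝔊 u u' * ((Real.sqrt (deg 𝔊 u'))⁻¹ * x (e,j) u')
        = ∑ q : G1.edgeSet × V2, adjMat 𝔊 u (Sum.inr (Sum.inr (Sum.inl q)))
            * (c * (if q.1 = e then z j q.2 else 0)) := by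
      rw [Fintype.sum_sum_type, Fintype.sum_sum_type, Fintype.sum_sum_type]
      simp only [x, Sum.elim_inl, Sum.elim_inr, mul_zero, Finset.sum_const_zero,
        zero_add, add_zero]
      refine Finset.sum_congr rfl fun q _ => ?_
      rw [hdegcopy q]
    rw [hS]
    rcases u with v | u
    · -- u = inl v : both sides are 0
      have hzero : ∑ q : G1.edgeSet × V2, adjMat 𝔊 (Sum.inl v) (Sum.inr (Sum.inr (Sum.inl q)))
          * (c * (if q.1 = e then z j q.2 else 0)) = 0 := by
        rw [Fintype.sum_prod_type]
        refine Finset.sum_eq_zero fun e' _ => ?_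
        have hAval : ∀ w : V2, adjMat 𝔊 (Sum.inl v) (Sum.inr (Sum.inr (Sum.inl (e', w))))
            = if v ∈ (e' : Sym2 V1) then 1 else 0 := fun w => adjMat_ite 𝔊 Iff.rfl
        by_cases he' : e' = e
        · subst he'
          have step : ∀ w : V2,
              adjMat 𝔊 (Sum.inl v) (Sum.inr (Sum.inr (Sum.inl (e', w))))
              * (c * (if ((e', w) : ↑G1.edgeSet × V2).1 = e' then z j w else 0))
              = ((if v ∈ (e' : Sym2 V1) then (1:ℝ) else 0) * c) * z j w := by
            intro w
            rw [hAval w, if_pos rfl]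
            ring
          rw [Finset.sum_congr rfl (fun w _ => step w), ← Finset.mul_sum, hsum j, mul_zero]
        · refine Finset.sum_eq_zero fun w _ => ?_
          simp [he']
      rw [hzero]
      simp [x]
    rcases u with e'' | u
    · -- u = mid e'' : both sides are 0
      have hzero : ∑ q : G1.edgeSet × V2,
          adjMat 𝔊 (Sum.inr (Sum.inl e'')) (Sum.inr (Sum.inr (Sum.inl q)))
          * (c * (if q.1 = e then z j q.2 else 0)) = 0 := by
        refine Finset.sum_eq_zero fun q _ => ?_
        have hAq : adjMat 𝔊 (Sum.inr (Sum.inl e'')) (Sum.inr (Sum.inr (Sum.inl q))) = 0 :=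
          adjMat_of_not_adj 𝔊 (fun h => h)
        rw [hAq]
        ring
      rw [hzero]
      simp [x]
    rcases u with q0 | q0
    · -- u = copy vertex (e0, w0)
      obtain ⟨e0, w0⟩ := q0
      have hAval : ∀ q : G1.edgeSet × V2,
          adjMat 𝔊 (Sum.inr (Sum.inr (Sum.inl (e0, w0)))) (Sum.inr (Sum.inr (Sum.inl q)))
          = if e0 = q.1 ∧ G2.Adj w0 q.2 then 1 else 0 := fun q => adjMat_ite 𝔊 Iff.rfl
      have hSval : ∑ q : G1.edgeSet × V2,
          adjMat 𝔊 (Sum.inr (Sum.inr (Sum.inl (e0, w0)))) (Sum.inr (Sum.inr (Sum.inl q)))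
          * (c * (if q.1 = e then z j q.2 else 0))
          = (if e0 = e then (1:ℝ) else 0) * (c * ((r2:ℝ) * (1 - μ) * z j w0)) := by
        rw [Fintype.sum_prod_type]
        have hrow : ∀ e' : G1.edgeSet, ∑ w : V2,
            adjMat 𝔊 (Sum.inr (Sum.inr (Sum.inl (e0, w0)))) (Sum.inr (Sum.inr (Sum.inl (e', w))))
            * (c * (if e' = e then z j w else 0))
            = if e0 = e' then (if e' = e then c * ((r2:ℝ) * (1 - μ) * z j w0) else 0) else 0 := by
          intro e'
          by_cases h0 : e0 = e'
          · subst h0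
            rw [if_pos rfl]
            by_cases h1 : e0 = e
            · subst h1
              rw [if_pos rfl]
              have hterm : ∀ w : V2,
                  adjMat 𝔊 (Sum.inr (Sum.inr (Sum.inl (e0, w0)))) (Sum.inr (Sum.inr (Sum.inl (e0, w))))
                  * (c * (if e0 = e0 then z j w else 0))
                  = c * ((if G2.Adj w0 w then (1:ℝ) else 0) * z j w) := by
                intro w
                rw [hAval (e0, w)]
                simp only [if_pos rfl, true_and, if_true, eq_self_iff_true]
                ring
              rw [Finset.sum_congr rfl (fun w _ => hterm w), ← Finset.mul_sum]
              have hadjz : ∑ w : V2, (if G2.Adj w0 w then (1:ℝ) else 0) * z j w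
                  = (r2:ℝ) * (1 - μ) * z j w0 := by
                have := congrFun (hAz j) w0
                rw [Pi.smul_apply, smul_eq_mul] at this
                have hmv : (adjMat G2 *ᵥ z j) w0 = ∑ w, adjMat G2 w0 w * z j w := rfl
                rw [hmv] at this
                rw [← this]
                exact Finset.sum_congr rfl fun w _ => by rw [adjMat_ite G2 Iff.rfl]
              rw [hadjz]
            · rw [if_neg h1]
              refine Finset.sum_eq_zero fun w _ => ?_
              rw [if_neg h1]
              ring
          · rw [if_neg h0]
            refine Finset.sum_eq_zero fun w _ => ?_
            rw [hAval (e', w)]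
            rw [if_neg (fun hcon => h0 hcon.1)]
            ring
        rw [Finset.sum_congr rfl (fun e' _ => hrow e'), Finset.sum_ite_eq]
        simp only [Finset.mem_univ, if_true]
        by_cases h1 : e0 = e
        · rw [if_pos h1, if_pos h1, one_mul]
        · rw [if_neg h1, if_neg h1, zero_mul]
      rw [hSval, hdegcopy (e0, w0)]
      by_cases h1 : e0 = e
      · subst h1
        have hx1 : x (e0, j) (Sum.inr (Sum.inr (Sum.inl (e0, w0)))) = z j w0 := by
          simp [x]
        have hl : (lam • x (e0, j)) (Sum.inr (Sum.inr (Sum.inl (e0, w0)))) = lam * z j w0 := by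
          simp [x]
        rw [hx1, hl, if_pos rfl, one_mul,
          show (Real.sqrt ((r2:ℝ)+2))⁻¹ = c from rfl, hlam]
        have hcc' : c * c * ((r2:ℝ)+2) = 1 := by
          rw [hcc]
          field_simp
        rw [div_mul_eq_mul_div, eq_div_iff (ne_of_gt hr2p2)]
        linear_combination (-((r2:ℝ) * (1-μ) * z j w0)) * hcc'
      · have hx1 : x (e, j) (Sum.inr (Sum.inr (Sum.inl (e0, w0)))) = 0 := by
          simp [x, h1]
        have hl : (lam • x (e, j)) (Sum.inr (Sum.inr (Sum.inl (e0, w0)))) = 0 := by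
          simp [x, h1]
        rw [hx1, hl, if_neg h1, zero_mul]
        ring
    · -- u = G3-copy vertex
      have hzero : ∑ q : G1.edgeSet × V2,
          adjMat 𝔊 (Sum.inr (Sum.inr (Sum.inr q0))) (Sum.inr (Sum.inr (Sum.inl q)))
          * (c * (if q.1 = e then z j q.2 else 0)) = 0 := by
        refine Finset.sum_eq_zero fun q _ => ?_
        have hAq : adjMat 𝔊 (Sum.inr (Sum.inr (Sum.inr q0))) (Sum.inr (Sum.inr (Sum.inl q))) = 0 :=
          adjMat_of_not_adj 𝔊 (fun h => h)
        rw [hAq]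
        ring
      rw [hzero]
      simp [x]
  have hdvd := charpoly_pow_dvd_of_eigenvectors (normLap_isHermitian 𝔊) x hxli hxeig
  rw [Fintype.card_prod, Fintype.card_fin] at hdvd
  exact hdvd


end NLS
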